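/- Let η be the linear order consisting of all functions f : ω → ω₁ with finite support (i.e., {n : f(n) ≠ 0} is finite), ordered by f < g iff f(n) < g(n) at the least n where f and g differ. For every ordinal α < ω₁, the suborder η^{≥α} = {f ∈ η : f(0) ≥ α} is order-isomorphic to η. -/

import Mathlib

open Cardinal

noncomputable section

/-- ω₁ as an ordinal. -/
abbrev om1 : Ordinal := (Cardinal.aleph 1).ord

/-- The countable ordinals, i.e. ordinals `< ω₁`, as a linearly ordered type. -/
abbrev O1 : Type 1 := {o : Ordinal // o < om1}

instance : Zero O1 := ⟨⟨0, by rw [Cardinal.lt_ord]; simpa using Cardinal.aleph_pos 1⟩⟩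

/-- η : the finitely supported functions ω → ω₁, ordered lexicographically:
`f < g` iff `f n < g n` at the least `n` where `f` and `g` differ. -/
abbrev Eta : Type 1 := Lex (ℕ →₀ O1)

/-- For every ordinal `α < ω₁`, the suborder `η^{≥α} = {f ∈ η : f 0 ≥ α}` is
order-isomorphic to `η`. -/
lemma add_lt_om1 {a b : Ordinal} (ha : a < om1) (hb : b < om1) : a + b < om1 := by
  rw [Cardinal.lt_ord] at *
  rw [Ordinal.card_add]
  exact Cardinal.add_lt_of_lt (Cardinal.aleph0_le_aleph 1) ha hb

theorem eta_ge_orderIso (α : Ordinal) (hα : α < om1) :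
    Nonempty ({f : Eta // α ≤ ((ofLex f) 0 : O1).1} ≃o Eta) := by
  -- the map Eta → subtype, g ↦ update g 0 (α + g 0)
  set F : Eta → {f : Eta // α ≤ ((ofLex f) 0 : O1).1} := fun g =>
    ⟨toLex ((ofLex g).update 0 ⟨α + ((ofLex g) 0).1, add_lt_om1 hα ((ofLex g) 0).2⟩),
      by simp [Finsupp.coe_update]⟩ with hF
  have Fval : ∀ (g : Eta) (n : ℕ), (ofLex (F g).1) n =
      if n = 0 then ⟨α + ((ofLex g) 0).1, add_lt_om1 hα ((ofLex g) 0).2⟩ else (ofLex g) n := by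
    intro g n
    simp [hF, Finsupp.coe_update, Function.update_apply]
  have hmono : StrictMono F := by
    intro f g hfg
    obtain ⟨j, hj1, hj2⟩ := (Finsupp.lex_def).1 hfg
    refine (Finsupp.lex_def).2 ⟨j, ?_, ?_⟩
    · intro d hd
      rw [Fval, Fval]
      rcases eq_or_ne d 0 with rfl | hd0
      · simp only [if_pos rfl]
        exact Subtype.ext (congrArg (fun x => α + x) (congrArg Subtype.val (hj1 0 hd)))
      · simp only [if_neg hd0]
        exact hj1 d hd
    · rw [Fval, Fval]
      rcases eq_or_ne j 0 with rfl | hj0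
      · simp only [if_pos rfl]
        exact Subtype.mk_lt_mk.2 (add_lt_add_right (Subtype.mk_lt_mk.1 hj2) α)
      · simpa only [if_neg hj0] using hj2
  have hsurj : Function.Surjective F := by
    rintro ⟨f, hf⟩
    have hsub : ((ofLex f) 0).1 - α < om1 :=
      lt_of_le_of_lt (Ordinal.sub_le_self _ _) ((ofLex f) 0).2
    set g : Eta := toLex ((ofLex f).update 0 ⟨((ofLex f) 0).1 - α, hsub⟩) with hg
    have h0 : (ofLex g) 0 = ⟨((ofLex f) 0).1 - α, hsub⟩ := by
      simp [hg, Finsupp.coe_update]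
    have hkey : ofLex ((F g).1) = ofLex f := by
      ext n
      rw [Fval]
      rcases eq_or_ne n 0 with rfl | hn
      · rw [if_pos rfl]
        refine congrArg Subtype.val (Subtype.ext ?_)
        show α + ((ofLex g) 0).1 = ((ofLex f) 0).1
        rw [h0, Ordinal.add_sub_cancel_of_le hf]
      · rw [if_neg hn]
        refine congrArg Subtype.val ?_
        show (ofLex g) n = (ofLex f) n
        simp [hg, Finsupp.coe_update, Function.update_apply, hn]
    exact ⟨g, Subtype.ext (congrArg toLex hkey)⟩
  exact ⟨(StrictMono.orderIsoOfSurjective F hmono hsurj).symm⟩
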